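/- Suppose d(x,y) ≤ d_max for all x, y. Then for every integer M ≥ 2 and every u ∈ (0,1], there exists a nonempty code C ⊆ 𝒴 with |C| ≤ M such that E_{X ~ P_X}[ min_{y ∈ C} d(X,y) ] ≤ D̃(u,Q_Y) + d_max · (1−u)^{M−1} ((M−1)u + 1). -/

import Mathlib

open MeasureTheory

open Finset

noncomputable def svol (a b u : ℝ) : ℝ :=
  (volume (Set.Icc (0:ℝ) 1 ∩ {v : ℝ | a + v * b ≤ u})).toReal

lemma svol_measSet (a b u : ℝ) : MeasurableSet {v : ℝ | a + v * b ≤ u} :=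
  measurableSet_le (by fun_prop) measurable_const

lemma svol_vol_ne_top (a b u : ℝ) :
    volume (Set.Icc (0:ℝ) 1 ∩ {v : ℝ | a + v * b ≤ u}) ≠ ⊤ := by
  refine ne_top_of_le_ne_top ?_ (measure_mono Set.inter_subset_left)
  simp [Real.volume_Icc]

lemma svol_nonneg (a b u : ℝ) : 0 ≤ svol a b u := ENNReal.toReal_nonneg

lemma svol_le_one (a b u : ℝ) : svol a b u ≤ 1 := by
  have h := measure_mono (μ := volume)
    (Set.inter_subset_left (s := Set.Icc (0:ℝ) 1) (t := {v : ℝ | a + v * b ≤ u}))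
  have h2 : volume (Set.Icc (0:ℝ) 1) = 1 := by simp [Real.volume_Icc]
  rw [h2] at h
  simpa [svol] using ENNReal.toReal_mono (by simp) h

lemma one_le_svol {a b u : ℝ} (hb : 0 ≤ b) (hab : a + b ≤ u) : 1 ≤ svol a b u := by
  have hsub : Set.Icc (0:ℝ) 1 ⊆ {v : ℝ | a + v * b ≤ u} := by
    intro v hv
    have : v * b ≤ b := mul_le_of_le_one_left hb hv.2
    simp only [Set.mem_setOf_eq]; linarith
  rw [svol, Set.inter_eq_self_of_subset_left hsub]
  simp [Real.volume_Icc]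

lemma svol_ge {a b u : ℝ} (hb : 0 < b) (hau : a ≤ u) (hub : u ≤ a + b) :
    (u - a) / b ≤ svol a b u := by
  set t : ℝ := (u - a) / b with ht
  have ht0 : 0 ≤ t := div_nonneg (by linarith) hb.le
  have ht1 : t ≤ 1 := by rw [ht, div_le_one hb]; linarith
  have htb : t * b = u - a := div_mul_cancel₀ _ hb.ne'
  have hsub : Set.Icc (0:ℝ) t ⊆ Set.Icc (0:ℝ) 1 ∩ {v : ℝ | a + v * b ≤ u} := by
    intro v hv
    refine ⟨⟨hv.1, hv.2.trans ht1⟩, ?_⟩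
    have : v * b ≤ t * b := mul_le_mul_of_nonneg_right hv.2 hb.le
    simp only [Set.mem_setOf_eq]; linarith
  have h := ENNReal.toReal_mono (svol_vol_ne_top a b u) (measure_mono (μ := volume) hsub)
  rw [Real.volume_Icc] at h
  simpa [svol, ENNReal.toReal_ofReal ht0] using h

lemma integral_eq_svol (a b u : ℝ) :
    (∫ v in Set.Icc (0:ℝ) 1, if a + v * b ≤ u then (1:ℝ) else 0) = svol a b u := by
  have h1 : (fun v : ℝ => if a + v * b ≤ u then (1:ℝ) else 0)
      = Set.indicator {v : ℝ | a + v * b ≤ u} (fun _ => (1:ℝ)) := by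
    ext v; simp [Set.indicator_apply, Set.mem_setOf_eq]
  rw [h1, setIntegral_indicator (svol_measSet a b u), setIntegral_const]
  simp [svol, smul_eq_mul, Measure.real]

lemma pit {Y : Type*} [Fintype Y] (Q : Y → ℝ) (hQ0 : ∀ y, 0 ≤ Q y)
    (hQ1 : ∑ y : Y, Q y = 1) (g : Y → ℝ) (u : ℝ) (hu0 : 0 < u) (hu1 : u ≤ 1) :
    u ≤ ∑ y : Y, Q y * svol (∑ y' : Y, if g y' < g y then Q y' else 0)
      (∑ y' : Y, if g y' = g y then Q y' else 0) u := by
  classical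
  set a : Y → ℝ := fun y => ∑ y' : Y, if g y' < g y then Q y' else 0 with ha
  set b : Y → ℝ := fun y => ∑ y' : Y, if g y' = g y then Q y' else 0 with hb
  set s : Y → ℝ := fun y => svol (a y) (b y) u with hs
  have hb0 : ∀ y, 0 ≤ b y := fun y =>
    Finset.sum_nonneg fun y' _ => by by_cases h : g y' = g y <;> simp [h, hQ0 y']
  have hc : ∀ y, a y + b y = ∑ y' : Y, if g y' ≤ g y then Q y' else 0 := by
    intro y
    rw [ha, hb, ← Finset.sum_add_distrib]
    refine Finset.sum_congr rfl fun y' _ => ?_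
    rcases lt_trichotomy (g y') (g y) with h | h | h
    · simp [h, h.le, h.ne]
    · simp [h, le_of_eq h]
    · simp [h.not_gt, h.ne', h.not_ge]
  have hcmono : ∀ y₁ y₂, g y₁ ≤ g y₂ → a y₁ + b y₁ ≤ a y₂ + b y₂ := by
    intro y₁ y₂ h
    rw [hc, hc]
    refine Finset.sum_le_sum fun y' _ => ?_
    split <;> split
    · exact le_rfl
    · next h1 h2 => exact absurd (h1.trans h) h2
    · exact hQ0 y'
    · exact le_rfl
  set G : Finset Y := Finset.univ.filter (fun y => a y + b y ≤ u) with hG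
  have hsG : ∀ y ∈ G, 1 ≤ s y := by
    intro y hy
    exact one_le_svol (hb0 y) (by simpa [hG] using hy)
  have hQs0 : ∀ y, 0 ≤ Q y * s y := fun y => mul_nonneg (hQ0 y) (svol_nonneg _ _ _)
  by_cases hGu : u ≤ ∑ y ∈ G, Q y
  · calc u ≤ ∑ y ∈ G, Q y := hGu
      _ ≤ ∑ y ∈ G, Q y * s y :=
        Finset.sum_le_sum fun y hy => le_mul_of_one_le_right (hQ0 y) (hsG y hy)
      _ ≤ ∑ y : Y, Q y * s y :=
        Finset.sum_le_sum_of_subset_of_nonneg (Finset.subset_univ G)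
          (fun y _ _ => hQs0 y)
  · push_neg at hGu
    have hTne : (Finset.univ.filter (fun y => ¬ (a y + b y ≤ u))).Nonempty := by
      by_contra hT
      rw [Finset.not_nonempty_iff_eq_empty, Finset.filter_eq_empty_iff] at hT
      have : G = Finset.univ := by
        rw [hG, Finset.filter_eq_self]
        intro y hy; by_contra h; exact (hT (Finset.mem_univ y)) h
      rw [this, hQ1] at hGu; linarith
    obtain ⟨y₀, hy₀T, hy₀min⟩ :=
      Finset.exists_min_image (Finset.univ.filter (fun y => ¬ (a y + b y ≤ u))) g hTne
    have hy₀ : ¬ (a y₀ + b y₀ ≤ u) := (Finset.mem_filter.mp hy₀T).2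
    have hGeq : G = Finset.univ.filter (fun y => g y < g y₀) := by
      ext y
      simp only [hG, Finset.mem_filter, Finset.mem_univ, true_and]
      constructor
      · intro hy
        by_contra hgy
        push_neg at hgy
        exact hy₀ ((hcmono y₀ y hgy).trans hy)
      · intro hgy
        by_contra hy
        have := hy₀min y (Finset.mem_filter.mpr ⟨Finset.mem_univ y, hy⟩)
        exact absurd hgy (not_lt.mpr this)
    have hay₀ : a y₀ = ∑ y ∈ G, Q y := by
      rw [hGeq, ha]
      rw [Finset.sum_filter]
    have hau : a y₀ < u := by rw [hay₀]; exact hGu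
    have hby₀ : 0 < b y₀ := by by_contra h; push_neg at h; exact hy₀ (by nlinarith [hb0 y₀])
    set D : Finset Y := Finset.univ.filter (fun y => g y = g y₀) with hD
    have hGD : Disjoint G D := by
      rw [Finset.disjoint_left]
      intro y hyG hyD
      rw [hGeq] at hyG
      have h1 := (Finset.mem_filter.mp hyG).2
      have h2 := (Finset.mem_filter.mp hyD).2
      exact absurd h2 h1.ne
    have habD : ∀ y ∈ D, a y = a y₀ ∧ b y = b y₀ := by
      intro y hy
      have h2 := (Finset.mem_filter.mp hy).2
      constructor
      · rw [ha]; dsimp only; rw [h2]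
      · rw [hb]; dsimp only; rw [h2]
    have hbD : ∑ y ∈ D, Q y = b y₀ := by
      rw [hD, hb, Finset.sum_filter]
    set t : ℝ := (u - a y₀) / b y₀ with htdef
    have hst : ∀ y ∈ D, t ≤ s y := by
      intro y hy
      obtain ⟨h1, h2⟩ := habD y hy
      rw [hs]; dsimp only; rw [h1, h2]
      exact svol_ge hby₀ hau.le (by linarith)
    have htb : t * b y₀ = u - a y₀ := div_mul_cancel₀ _ hby₀.ne'
    have ht0 : 0 ≤ t := div_nonneg (by linarith) hby₀.le
    have hDsum : u - a y₀ ≤ ∑ y ∈ D, Q y * s y := by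
      calc u - a y₀ = ∑ y ∈ D, Q y * t := by rw [← Finset.sum_mul, hbD, mul_comm, htb]
        _ ≤ ∑ y ∈ D, Q y * s y :=
          Finset.sum_le_sum fun y hy => mul_le_mul_of_nonneg_left (hst y hy) (hQ0 y)
    have hGsum : a y₀ ≤ ∑ y ∈ G, Q y * s y := by
      rw [hay₀]
      exact Finset.sum_le_sum fun y hy => le_mul_of_one_le_right (hQ0 y) (hsG y hy)
    calc u = a y₀ + (u - a y₀) := by ring
      _ ≤ (∑ y ∈ G, Q y * s y) + ∑ y ∈ D, Q y * s y := add_le_add hGsum hDsum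
      _ = ∑ y ∈ G ∪ D, Q y * s y := (Finset.sum_union hGD).symm
      _ ≤ ∑ y : Y, Q y * s y :=
        Finset.sum_le_sum_of_subset_of_nonneg (Finset.subset_univ _)
          (fun y _ _ => hQs0 y)

lemma key_bound {Y : Type*} [Fintype Y] [Nonempty Y]
    (Q : Y → ℝ) (hQ0 : ∀ y, 0 ≤ Q y) (hQ1 : ∑ y : Y, Q y = 1)
    (g : Y → ℝ) (dmax : ℝ) (hg0 : ∀ y, 0 ≤ g y) (hgmax : ∀ y, g y ≤ dmax)
    (σ : Y → ℝ) (hσ0 : ∀ y, 0 ≤ σ y) (hσ1 : ∀ y, σ y ≤ 1) :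
    ∀ n : ℕ, ∑ f : Fin (n+1) → Y, (∏ i, Q (f i)) *
        (Finset.univ.inf' Finset.univ_nonempty fun i => g (f i))
      ≤ (∑ y : Y, Q y * g y * σ y) * (∑ j ∈ Finset.range (n+1), (∑ y : Y, Q y * (1 - σ y))^j)
        + dmax * (∑ y : Y, Q y * (1 - σ y))^(n+1) := by
  classical
  set α : ℝ := ∑ y : Y, Q y * g y * σ y with hα
  set β : ℝ := ∑ y : Y, Q y * (1 - σ y) with hβ
  have hβ0 : 0 ≤ β :=
    Finset.sum_nonneg fun y _ => mul_nonneg (hQ0 y) (by linarith [hσ1 y])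
  have hprod1 : ∀ m : ℕ, (∑ f : Fin m → Y, ∏ i, Q (f i)) = 1 := by
    intro m
    rw [← Fintype.sum_pow Q m, hQ1, one_pow]
  have hprodnn : ∀ m : ℕ, ∀ f : Fin m → Y, 0 ≤ ∏ i, Q (f i) := fun m f =>
    Finset.prod_nonneg fun i _ => hQ0 (f i)
  intro n
  induction n with
  | zero =>
    have hbase : (∑ f : Fin 1 → Y, (∏ i, Q (f i)) *
        (Finset.univ.inf' Finset.univ_nonempty fun i => g (f i)))
        = ∑ y : Y, Q y * g y := by
      rw [← (Equiv.funUnique (Fin 1) Y).symm.sum_comp]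
      refine Finset.sum_congr rfl fun y _ => ?_
      simp [Equiv.funUnique, Finset.univ_unique, Finset.inf'_singleton]
    rw [hbase]
    have : ∀ y : Y, Q y * g y ≤ Q y * g y * σ y + dmax * (Q y * (1 - σ y)) := by
      intro y
      nlinarith [hQ0 y, hg0 y, hσ0 y, hσ1 y, hgmax y,
        mul_nonneg (hQ0 y) (sub_nonneg.mpr (hσ1 y))]
    calc ∑ y : Y, Q y * g y ≤ ∑ y : Y, (Q y * g y * σ y + dmax * (Q y * (1 - σ y))) :=
          Finset.sum_le_sum fun y _ => this y
      _ = α * 1 + dmax * β := by rw [Finset.sum_add_distrib, ← Finset.mul_sum, hα, hβ]; ring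
      _ = α * (∑ j ∈ Finset.range 1, β^j) + dmax * β^1 := by simp
  | succ n ih =>
    -- decompose f : Fin (n+2) → Y  as  Fin.cons y f'
    have hdecomp : ∀ F : (Fin (n+2) → Y) → ℝ,
        (∑ f : Fin (n+2) → Y, F f) = ∑ y : Y, ∑ f' : Fin (n+1) → Y, F (Fin.cons y f' : Fin (n+2) → Y) := by
      intro F
      rw [← (Fin.consEquiv (fun _ : Fin (n+2) => Y)).sum_comp]
      rw [Fintype.sum_prod_type]
      rfl
    rw [hdecomp]
    have hstep : ∀ (y : Y) (f' : Fin (n+1) → Y),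
        (∏ i, Q ((Fin.cons y f' : Fin (n+2) → Y) i)) *
          (Finset.univ.inf' Finset.univ_nonempty fun i => g ((Fin.cons y f' : Fin (n+2) → Y) i))
        ≤ (Q y * ∏ i, Q (f' i)) * (σ y * g y
            + (1 - σ y) * (Finset.univ.inf' Finset.univ_nonempty fun i => g (f' i))) := by
      intro y f'
      have hprod : (∏ i, Q ((Fin.cons y f' : Fin (n+2) → Y) i)) = Q y * ∏ i, Q (f' i) := by
        rw [Fin.prod_univ_succ]; simp
      rw [hprod]
      refine mul_le_mul_of_nonneg_left ?_ (mul_nonneg (hQ0 y) (hprodnn _ f'))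
      set I := Finset.univ.inf' Finset.univ_nonempty fun i => g ((Fin.cons y f' : Fin (n+2) → Y) i) with hI
      set J := Finset.univ.inf' Finset.univ_nonempty fun i => g (f' i) with hJ
      have hIy : I ≤ g y := by
        have := Finset.inf'_le (f := fun i => g ((Fin.cons y f' : Fin (n+2) → Y) i))
          (b := (0 : Fin (n+2))) (Finset.mem_univ _)
        rwa [Fin.cons_zero] at this
      have hIJ : I ≤ J := by
        refine Finset.le_inf' _ _ fun i _ => ?_
        have := Finset.inf'_le (f := fun i => g ((Fin.cons y f' : Fin (n+2) → Y) i))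
          (b := i.succ) (Finset.mem_univ _)
        rwa [Fin.cons_succ] at this
      nlinarith [hσ0 y, hσ1 y]
    calc (∑ y : Y, ∑ f' : Fin (n+1) → Y, (∏ i, Q ((Fin.cons y f' : Fin (n+2) → Y) i)) *
          (Finset.univ.inf' Finset.univ_nonempty fun i => g ((Fin.cons y f' : Fin (n+2) → Y) i)))
        ≤ ∑ y : Y, ∑ f' : Fin (n+1) → Y, (Q y * ∏ i, Q (f' i)) * (σ y * g y
            + (1 - σ y) * (Finset.univ.inf' Finset.univ_nonempty fun i => g (f' i))) :=
          Finset.sum_le_sum fun y _ => Finset.sum_le_sum fun f' _ => hstep y f'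
      _ = α + β * (∑ f' : Fin (n+1) → Y, (∏ i, Q (f' i)) *
            (Finset.univ.inf' Finset.univ_nonempty fun i => g (f' i))) := by
          set S : ℝ := ∑ f' : Fin (n+1) → Y, (∏ i, Q (f' i)) *
            (Finset.univ.inf' Finset.univ_nonempty fun i => g (f' i)) with hS
          have this1 : ∀ y : Y, (∑ f' : Fin (n+1) → Y,
              (Q y * ∏ i, Q (f' i)) * (σ y * g y
              + (1 - σ y) * (Finset.univ.inf' Finset.univ_nonempty fun i => g (f' i))))
              = Q y * g y * σ y + Q y * (1 - σ y) * S := by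
            intro y
            have e1 : ∀ f' : Fin (n+1) → Y, (Q y * ∏ i, Q (f' i)) * (σ y * g y
                + (1 - σ y) * (Finset.univ.inf' Finset.univ_nonempty fun i => g (f' i)))
                = (Q y * σ y * g y) * (∏ i, Q (f' i))
                  + (Q y * (1 - σ y)) * ((∏ i, Q (f' i)) *
                    (Finset.univ.inf' Finset.univ_nonempty fun i => g (f' i))) :=
              fun f' => by ring
            rw [Finset.sum_congr rfl fun f' _ => e1 f', Finset.sum_add_distrib,
              ← Finset.mul_sum, ← Finset.mul_sum, hprod1]
            rw [hS]
            ring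
          rw [Finset.sum_congr rfl fun y _ => this1 y, Finset.sum_add_distrib,
            ← Finset.sum_mul, hα, hβ]
      _ ≤ α + β * (α * (∑ j ∈ Finset.range (n+1), β^j) + dmax * β^(n+1)) :=
          add_le_add le_rfl (mul_le_mul_of_nonneg_left ih hβ0)
      _ = α * (∑ j ∈ Finset.range (n+2), β^j) + dmax * β^(n+2) := by
          have hgeom : (∑ j ∈ Finset.range (n+2), β^j)
              = 1 + β * ∑ j ∈ Finset.range (n+1), β^j := by
            rw [geom_sum_succ]; ring
          rw [hgeom]; ring

/-- The pairwise correct probability `p_c(x,y,u)` with respect to the pmf `Q` on `Y`: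
`p_c(x,y,u) = Q{y' : d(x,y') < d(x,y)} + u * Q{y' : d(x,y') = d(x,y)}`. -/
noncomputable def pc {X Y : Type*} [Fintype Y] (Q : Y → ℝ) (d : X → Y → ℝ)
    (x : X) (y : Y) (u : ℝ) : ℝ :=
  (∑ y' : Y, if d x y' < d x y then Q y' else 0)
    + u * (∑ y' : Y, if d x y' = d x y then Q y' else 0)

/-- The functional `D̃(w,Q) = w⁻¹ ⬝ E_{P ⊗ Q ⊗ Unif[0,1]}[ d(X,Y) ⬝ 1{p_c(X,Y,U) ≤ w} ]`. -/
noncomputable def Dtilde {X Y : Type*} [Fintype X] [Fintype Y]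
    (P : X → ℝ) (Q : Y → ℝ) (d : X → Y → ℝ) (w : ℝ) : ℝ :=
  w⁻¹ * ∑ x : X, ∑ y : Y, P x * Q y * d x y *
    (∫ u in Set.Icc (0:ℝ) 1, if pc Q d x y u ≤ w then (1:ℝ) else 0)

lemma key_bound2 {Y : Type*} [Fintype Y] [Nonempty Y]
    (Q : Y → ℝ) (hQ0 : ∀ y, 0 ≤ Q y) (hQ1 : ∑ y : Y, Q y = 1)
    (g : Y → ℝ) (dmax : ℝ) (hg0 : ∀ y, 0 ≤ g y) (hgmax : ∀ y, g y ≤ dmax)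
    (σ : Y → ℝ) (hσ0 : ∀ y, 0 ≤ σ y) (hσ1 : ∀ y, σ y ≤ 1)
    (u : ℝ) (hu0 : 0 < u) (hu1 : u ≤ 1) (hpit : u ≤ ∑ y : Y, Q y * σ y) (n : ℕ) :
    ∑ f : Fin (n+1) → Y, (∏ i, Q (f i)) *
        (Finset.univ.inf' Finset.univ_nonempty fun i => g (f i))
      ≤ (∑ y : Y, Q y * g y * σ y) * u⁻¹ + dmax * (1 - u)^(n+1) := by
  have hβ0 : 0 ≤ ∑ y : Y, Q y * (1 - σ y) :=
    Finset.sum_nonneg fun y _ => mul_nonneg (hQ0 y) (by linarith [hσ1 y])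
  have hβu : (∑ y : Y, Q y * (1 - σ y)) ≤ 1 - u := by
    have h : (∑ y : Y, Q y * (1 - σ y)) = (∑ y : Y, Q y) - ∑ y : Y, Q y * σ y := by
      rw [← Finset.sum_sub_distrib]
      exact Finset.sum_congr rfl fun y _ => by ring
    rw [h, hQ1]; linarith
  have hα0 : 0 ≤ ∑ y : Y, Q y * g y * σ y :=
    Finset.sum_nonneg fun y _ => mul_nonneg (mul_nonneg (hQ0 y) (hg0 y)) (hσ0 y)
  have h1u : (0:ℝ) ≤ 1 - u := by linarith
  have hdmax0 : 0 ≤ dmax := le_trans (hg0 (Classical.arbitrary Y)) (hgmax _)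
  have hS : (∑ j ∈ Finset.range (n+1), (∑ y : Y, Q y * (1 - σ y))^j) ≤ u⁻¹ := by
    have h3 : (∑ j ∈ Finset.range (n+1), (1-u)^j) ≤ u⁻¹ := by
      have h4 := geom_sum_mul (1-u) (n+1)
      have h5 : (0:ℝ) ≤ (1-u)^(n+1) := pow_nonneg h1u _
      have h6 : (∑ j ∈ Finset.range (n+1), (1-u)^j) * u ≤ 1 := by nlinarith [h4, h5]
      calc (∑ j ∈ Finset.range (n+1), (1-u)^j)
          = ((∑ j ∈ Finset.range (n+1), (1-u)^j) * u) * u⁻¹ := by field_simp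
        _ ≤ 1 * u⁻¹ := mul_le_mul_of_nonneg_right h6 (inv_nonneg.mpr hu0.le)
        _ = u⁻¹ := one_mul _
    exact le_trans (Finset.sum_le_sum fun j _ => pow_le_pow_left₀ hβ0 hβu j) h3
  have hpow : (∑ y : Y, Q y * (1 - σ y))^(n+1) ≤ (1-u)^(n+1) := pow_le_pow_left₀ hβ0 hβu _
  calc ∑ f : Fin (n+1) → Y, (∏ i, Q (f i)) *
        (Finset.univ.inf' Finset.univ_nonempty fun i => g (f i))
      ≤ (∑ y : Y, Q y * g y * σ y) * (∑ j ∈ Finset.range (n+1), (∑ y : Y, Q y * (1 - σ y))^j)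
        + dmax * (∑ y : Y, Q y * (1 - σ y))^(n+1) :=
        key_bound Q hQ0 hQ1 g dmax hg0 hgmax σ hσ0 hσ1 n
    _ ≤ (∑ y : Y, Q y * g y * σ y) * u⁻¹ + dmax * (1 - u)^(n+1) :=
        add_le_add (mul_le_mul_of_nonneg_left hS hα0) (mul_le_mul_of_nonneg_left hpow hdmax0)


/-- Achievability with at most `M` codewords: for any `u ∈ (0,1]` there is a nonempty code
`C ⊆ Y` with `|C| ≤ M` whose average distortion is at most
`D̃(u,Q) + d_max (1−u)^{M−1}((M−1)u + 1)`. -/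
theorem achievability_M {X Y : Type*} [Fintype X] [Fintype Y] [Nonempty X] [Nonempty Y]
    (P : X → ℝ) (hP0 : ∀ x, 0 ≤ P x) (hP1 : ∑ x : X, P x = 1)
    (Q : Y → ℝ) (hQ0 : ∀ y, 0 ≤ Q y) (hQ1 : ∑ y : Y, Q y = 1)
    (d : X → Y → ℝ) (hd : ∀ x y, 0 ≤ d x y)
    (dmax : ℝ) (hdmax : ∀ x y, d x y ≤ dmax)
    (M : ℕ) (hM : 2 ≤ M) (u : ℝ) (hu : u ∈ Set.Ioc (0:ℝ) 1) :
    ∃ C : Finset Y, ∃ hC : C.Nonempty, C.card ≤ M ∧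
      (∑ x : X, P x * C.inf' hC fun y => d x y)
        ≤ Dtilde P Q d u + dmax * (1 - u) ^ (M - 1) * (((M:ℝ) - 1) * u + 1) := by
  classical
  obtain ⟨hu0, hu1⟩ := hu
  obtain ⟨n, rfl⟩ : ∃ n, M = n + 2 := ⟨M - 2, by omega⟩
  have hdmax0 : 0 ≤ dmax :=
    le_trans (hd (Classical.arbitrary X) (Classical.arbitrary Y)) (hdmax _ _)
  have h1u : (0:ℝ) ≤ 1 - u := by linarith
  -- the randomized-tie-breaking acceptance probability
  set s : X → Y → ℝ := fun x y => svol (∑ y' : Y, if d x y' < d x y then Q y' else 0)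
    (∑ y' : Y, if d x y' = d x y then Q y' else 0) u with hs
  -- per-source-symbol expected distortion bound over random codebooks
  have hkey : ∀ x : X, (∑ f : Fin (n+2) → Y, (∏ i, Q (f i)) *
      (Finset.univ.inf' Finset.univ_nonempty fun i => d x (f i)))
      ≤ (∑ y : Y, Q y * d x y * s x y) * u⁻¹ + dmax * (1-u)^(n+2) := by
    intro x
    have hp : u ≤ ∑ y : Y, Q y * s x y := by
      simpa [hs] using pit Q hQ0 hQ1 (d x) u hu0 hu1
    exact key_bound2 Q hQ0 hQ1 (d x) dmax (hd x) (hdmax x) (s x)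
      (fun y => svol_nonneg _ _ _) (fun y => svol_le_one _ _ _) u hu0 hu1 hp (n+1)
  -- choose the best codebook
  obtain ⟨f₀, -, hf₀⟩ := Finset.exists_min_image (Finset.univ : Finset (Fin (n+2) → Y))
    (fun f => ∑ x : X, P x * (Finset.univ.inf' Finset.univ_nonempty fun i => d x (f i)))
    Finset.univ_nonempty
  have hCne : (Finset.univ.image f₀).Nonempty :=
    (Finset.univ_nonempty).image f₀
  refine ⟨Finset.univ.image f₀, hCne, ?_, ?_⟩
  · calc (Finset.univ.image f₀).card ≤ (Finset.univ : Finset (Fin (n+2))).card :=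
        Finset.card_image_le
      _ = n + 2 := by simp
  · have hinf : ∀ x : X, ((Finset.univ.image f₀).inf' hCne fun y => d x y)
        = Finset.univ.inf' Finset.univ_nonempty fun i => d x (f₀ i) := by
      intro x
      rw [Finset.inf'_image]
      rfl
    have hW0 : ∀ f : Fin (n+2) → Y, 0 ≤ ∏ i, Q (f i) :=
      fun f => Finset.prod_nonneg fun i _ => hQ0 (f i)
    have hW1 : (∑ f : Fin (n+2) → Y, ∏ i, Q (f i)) = 1 := by
      rw [← Fintype.sum_pow Q (n+2), hQ1, one_pow]
    have hL : (∑ x : X, P x * (Finset.univ.inf' Finset.univ_nonempty fun i => d x (f₀ i)))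
        ≤ ∑ f : Fin (n+2) → Y, (∏ i, Q (f i)) *
          (∑ x : X, P x * (Finset.univ.inf' Finset.univ_nonempty fun i => d x (f i))) := by
      calc (∑ x : X, P x * (Finset.univ.inf' Finset.univ_nonempty fun i => d x (f₀ i)))
          = (∑ f : Fin (n+2) → Y, ∏ i, Q (f i)) *
            (∑ x : X, P x * (Finset.univ.inf' Finset.univ_nonempty fun i => d x (f₀ i))) := by
            rw [hW1, one_mul]
        _ = ∑ f : Fin (n+2) → Y, (∏ i, Q (f i)) *
            (∑ x : X, P x * (Finset.univ.inf' Finset.univ_nonempty fun i => d x (f₀ i))) :=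
            Finset.sum_mul _ _ _
        _ ≤ _ := Finset.sum_le_sum fun f _ =>
            mul_le_mul_of_nonneg_left (hf₀ f (Finset.mem_univ f)) (hW0 f)
    have hswap : (∑ f : Fin (n+2) → Y, (∏ i, Q (f i)) *
          (∑ x : X, P x * (Finset.univ.inf' Finset.univ_nonempty fun i => d x (f i))))
        = ∑ x : X, P x * (∑ f : Fin (n+2) → Y, (∏ i, Q (f i)) *
          (Finset.univ.inf' Finset.univ_nonempty fun i => d x (f i))) := by
      calc (∑ f : Fin (n+2) → Y, (∏ i, Q (f i)) *
            (∑ x : X, P x * (Finset.univ.inf' Finset.univ_nonempty fun i => d x (f i))))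
          = ∑ f : Fin (n+2) → Y, ∑ x : X, P x * ((∏ i, Q (f i)) *
            (Finset.univ.inf' Finset.univ_nonempty fun i => d x (f i))) := by
            refine Finset.sum_congr rfl fun f _ => ?_
            rw [Finset.mul_sum]
            exact Finset.sum_congr rfl fun x _ => by ring
        _ = ∑ x : X, ∑ f : Fin (n+2) → Y, P x * ((∏ i, Q (f i)) *
            (Finset.univ.inf' Finset.univ_nonempty fun i => d x (f i))) := Finset.sum_comm
        _ = ∑ x : X, P x * (∑ f : Fin (n+2) → Y, (∏ i, Q (f i)) *
            (Finset.univ.inf' Finset.univ_nonempty fun i => d x (f i))) := by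
            exact Finset.sum_congr rfl fun x _ => (Finset.mul_sum _ _ _).symm
    have hpow2 : dmax * (1-u)^(n+2) ≤ dmax * ((1-u)^(n+1) * (((n:ℝ)+1)*u+1)) := by
      refine mul_le_mul_of_nonneg_left ?_ hdmax0
      rw [pow_succ]
      refine mul_le_mul_of_nonneg_left ?_ (pow_nonneg h1u _)
      nlinarith
    have hDt : Dtilde P Q d u = u⁻¹ * ∑ x : X, ∑ y : Y, P x * Q y * d x y * s x y := by
      rw [Dtilde]
      congr 1
      refine Finset.sum_congr rfl fun x _ => Finset.sum_congr rfl fun y _ => ?_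
      congr 1
      rw [hs]
      simp only [pc]
      exact integral_eq_svol _ _ _
    have e : ∀ x : X, P x * ((∑ y : Y, Q y * d x y * s x y) * u⁻¹
          + dmax * ((1-u)^(n+1)*(((n:ℝ)+1)*u+1)))
        = u⁻¹ * (∑ y : Y, P x * Q y * d x y * s x y)
          + P x * (dmax * ((1-u)^(n+1)*(((n:ℝ)+1)*u+1))) := by
      intro x
      have h : (∑ y : Y, P x * Q y * d x y * s x y) = P x * ∑ y : Y, Q y * d x y * s x y := by
        rw [Finset.mul_sum]
        exact Finset.sum_congr rfl fun y _ => by ring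
      rw [h]; ring
    calc (∑ x : X, P x * (Finset.univ.image f₀).inf' hCne fun y => d x y)
        = ∑ x : X, P x * (Finset.univ.inf' Finset.univ_nonempty fun i => d x (f₀ i)) :=
          Finset.sum_congr rfl fun x _ => by rw [hinf x]
      _ ≤ ∑ f : Fin (n+2) → Y, (∏ i, Q (f i)) *
          (∑ x : X, P x * (Finset.univ.inf' Finset.univ_nonempty fun i => d x (f i))) := hL
      _ = ∑ x : X, P x * (∑ f : Fin (n+2) → Y, (∏ i, Q (f i)) *
          (Finset.univ.inf' Finset.univ_nonempty fun i => d x (f i))) := hswap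
      _ ≤ ∑ x : X, P x * ((∑ y : Y, Q y * d x y * s x y) * u⁻¹
          + dmax * ((1-u)^(n+1)*(((n:ℝ)+1)*u+1))) := by
          refine Finset.sum_le_sum fun x _ => mul_le_mul_of_nonneg_left ?_ (hP0 x)
          exact (hkey x).trans (add_le_add le_rfl hpow2)
      _ = u⁻¹ * (∑ x : X, ∑ y : Y, P x * Q y * d x y * s x y)
          + dmax * ((1-u)^(n+1)*(((n:ℝ)+1)*u+1)) := by
          rw [Finset.sum_congr rfl fun x _ => e x, Finset.sum_add_distrib,
            ← Finset.mul_sum, ← Finset.sum_mul, hP1, one_mul]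
      _ = Dtilde P Q d u + dmax * (1 - u) ^ (n + 2 - 1) * ((((n + 2 : ℕ) : ℝ) - 1) * u + 1) := by
          rw [hDt]
          have hexp : n + 2 - 1 = n + 1 := rfl
          rw [hexp]
          push_cast
          ring
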